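/- For every n ≥ 2, the independence complex of the categorical product Kₙ × K₂ is homotopy equivalent to a wedge of n - 1 circles S¹. -/

import Mathlib

noncomputable section

open scoped unitInterval

/-- The `n`-dimensional sphere. -/
def Sph (n : ℕ) : Type := (Metric.sphere (0 : EuclideanSpace ℝ (Fin (n+1))) 1 : Set _)

instance (n : ℕ) : TopologicalSpace (Sph n) := by unfold Sph; infer_instance

/-- Basepoint of the sphere. -/
def SphPt (n : ℕ) : Sph n := ⟨EuclideanSpace.single 0 1, by simp⟩

section JoinDefs
variable (X Y : Type) [TopologicalSpace X] [TopologicalSpace Y]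

/-- Points of the auxiliary carrier identified with the point `x` of `X` in the join. -/
def joinAtX (a : (X × Y × I) ⊕ (X ⊕ Y)) (x : X) : Prop :=
  match a with
  | .inl p => p.2.2 = 0 ∧ p.1 = x
  | .inr (.inl x') => x' = x
  | .inr (.inr _) => False

/-- Points of the auxiliary carrier identified with the point `y` of `Y` in the join. -/
def joinAtY (a : (X × Y × I) ⊕ (X ⊕ Y)) (y : Y) : Prop :=
  match a with
  | .inl p => p.2.2 = 1 ∧ p.2.1 = y
  | .inr (.inl _) => False
  | .inr (.inr y') => y' = y

/-- The topological join `X * Y` (with the correct value `X * ∅ = X`, `∅ * Y = Y`). -/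
def Join : Type :=
  Quot (fun a b : (X × Y × I) ⊕ (X ⊕ Y) =>
    (∃ x, joinAtX X Y a x ∧ joinAtX X Y b x) ∨ (∃ y, joinAtY X Y a y ∧ joinAtY X Y b y))

instance instTopJoin : TopologicalSpace (Join X Y) := by unfold Join; infer_instance

/-- The (unreduced) suspension of `X`, as the join of `X` with a two-point discrete space. -/
def Susp : Type := Join X Bool

instance instTopSusp : TopologicalSpace (Susp X) := by unfold Susp; infer_instance

/-- A canonical basepoint of the suspension (the north pole). -/
def SuspPt : Susp X := Quot.mk _ (.inr (.inr true))

/-- The wedge sum of two pointed spaces. -/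
def Wedge (x₀ : X) (y₀ : Y) : Type :=
  Quot (fun a b : X ⊕ Y =>
    (a = .inl x₀ ∨ a = .inr y₀) ∧ (b = .inl x₀ ∨ b = .inr y₀))

instance instTopWedge (x₀ : X) (y₀ : Y) : TopologicalSpace (Wedge X Y x₀ y₀) := by
  unfold Wedge; infer_instance

end JoinDefs

/-- A wedge of spheres of dimensions `d i`, `i : ι` (a point when `ι` is empty). -/
def WedgeSpheres (ι : Type) (d : ι → ℕ) : Type :=
  Quot (fun a b : Unit ⊕ (Σ i, Sph (d i)) =>
    (a = .inl () ∨ ∃ i, a = .inr ⟨i, SphPt (d i)⟩) ∧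
    (b = .inl () ∨ ∃ i, b = .inr ⟨i, SphPt (d i)⟩))

instance (ι : Type) (d : ι → ℕ) : TopologicalSpace (WedgeSpheres ι d) := by
  unfold WedgeSpheres; infer_instance

/-- The geometric realization of the independence complex of a graph: the space of
finitely supported probability distributions on `V` whose support is an independent set. -/
def indepReal {V : Type} (G : SimpleGraph V) : Type :=
  {f : V → ℝ // (∀ x, 0 ≤ f x) ∧ (∑ᶠ x, f x) = 1 ∧
    ∀ u v, f u ≠ 0 → f v ≠ 0 → ¬ G.Adj u v}

instance {V : Type} (G : SimpleGraph V) : TopologicalSpace (indepReal G) := by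
  unfold indepReal; infer_instance

/-- The categorical (tensor) product of two simple graphs. -/
def tensorG {V W : Type} (G : SimpleGraph V) (H : SimpleGraph W) : SimpleGraph (V × W) where
  Adj a b := G.Adj a.1 b.1 ∧ H.Adj a.2 b.2
  symm := ⟨fun _ _ h => ⟨h.1.symm, h.2.symm⟩⟩
  loopless := ⟨fun a h => G.loopless.irrefl a.1 h.1⟩

/-- The complete graph on two vertices. -/
def K2 : SimpleGraph (Fin 2) := SimpleGraph.completeGraph (Fin 2)

/-- The generalized Mycielskian `μ_l(G)`.  The vertex `none` is the apex `w`; the layer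
`V × {i}` of the paper corresponds to the vertices `some (v, i-1)`, the top layer
(the copy of `G`) being `some (v, l)`. -/
def myc {V : Type} (l : ℕ) (G : SimpleGraph V) : SimpleGraph (Option (V × Fin (l+1))) where
  Adj a b :=
    match a, b with
    | some p, some q => G.Adj p.1 q.1 ∧
        ((p.2.val + 1 = q.2.val ∨ q.2.val + 1 = p.2.val) ∨ (p.2.val = q.2.val ∧ p.2.val = l))
    | some p, none => p.2.val = 0
    | none, some q => q.2.val = 0
    | none, none => False
  symm := by
    constructor
    rintro (_|p) (_|q) h <;> simp_all
    exact ⟨h.1.symm, by omega⟩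
  loopless := by
    constructor
    rintro (_|p) h
    · exact h
    · exact SimpleGraph.irrefl _ h.1


namespace W12

open Real

variable {n : ℕ}

abbrev KG (n : ℕ) := tensorG (SimpleGraph.completeGraph (Fin n)) K2
abbrev Xs (n : ℕ) := indepReal (KG n)

lemma adj_iff (a b : Fin n × Fin 2) : (KG n).Adj a b ↔ a.1 ≠ b.1 ∧ a.2 ≠ b.2 := by
  simp [tensorG, K2, SimpleGraph.completeGraph]

def mkX (f : Fin n × Fin 2 → ℝ) (h0 : ∀ v, 0 ≤ f v) (h1 : ∑ v, f v = 1)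
    (h2 : ∀ i j : Fin n, i ≠ j → f (i,0) = 0 ∨ f (j,1) = 0) : Xs n := by
  refine ⟨f, h0, by rw [finsum_eq_sum_of_fintype]; exact h1, ?_⟩
  rintro ⟨i,ε⟩ ⟨j,ε'⟩ hu hv hadj
  rw [adj_iff] at hadj
  obtain ⟨hij, hee⟩ := hadj
  simp only at hij hee
  fin_cases ε <;> fin_cases ε' <;> simp_all
  · rcases h2 i j hij with h | h <;> simp_all
  · rcases h2 j i (Ne.symm hij) with h | h <;> simp_all

lemma Xval (f h0 h1 h2) : (mkX (n := n) f h0 h1 h2).1 = f := rfl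

lemma X_nonneg (x : Xs n) (v) : 0 ≤ x.1 v := x.2.1 v

lemma X_sum (x : Xs n) : ∑ v, x.1 v = 1 := by
  rw [← finsum_eq_sum_of_fintype]; exact x.2.2.1

lemma X_indep (x : Xs n) : ∀ i j : Fin n, i ≠ j → x.1 (i,0) = 0 ∨ x.1 (j,1) = 0 := by
  intro i j hij
  by_contra h
  push_neg at h
  refine x.2.2.2 (i,0) (j,1) h.1 h.2 ?_
  rw [adj_iff]
  refine ⟨hij, ?_⟩
  simp

def sl (x : Xs n) : ℝ := ∑ k, x.1 (k,1)
def sa (x : Xs n) : ℝ := ∑ k, x.1 (k,0)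

lemma sa_add_sl (x : Xs n) : sa x + sl x = 1 := by
  have := X_sum x
  rw [Fintype.sum_prod_type] at this
  simp only [Fin.sum_univ_two] at this
  rw [sa, sl, ← Finset.sum_add_distrib]
  exact this

lemma sl_nonneg (x : Xs n) : 0 ≤ sl x := Finset.sum_nonneg fun k _ => X_nonneg x _
lemma sa_nonneg (x : Xs n) : 0 ≤ sa x := Finset.sum_nonneg fun k _ => X_nonneg x _
lemma sl_le_one (x : Xs n) : sl x ≤ 1 := by have := sa_add_sl x; have := sa_nonneg x; linarith

lemma layer1_zero (x : Xs n) (h : sl x = 0) (k : Fin n) : x.1 (k,1) = 0 := by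
  have := (Finset.sum_eq_zero_iff_of_nonneg (fun i _ => X_nonneg x (i,1))).1 h
  exact this k (Finset.mem_univ k)

lemma layer0_zero (x : Xs n) (h : sl x = 1) (k : Fin n) : x.1 (k,0) = 0 := by
  have hsa : sa x = 0 := by have := sa_add_sl x; linarith
  have := (Finset.sum_eq_zero_iff_of_nonneg (fun i _ => X_nonneg x (i,0))).1 hsa
  exact this k (Finset.mem_univ k)

/-- the (closed) edge of vertex j -/
def Ej (j : Fin n) : Set (Xs n) := {x | ∀ k, k ≠ j → x.1 (k,0) = 0 ∧ x.1 (k,1) = 0}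

lemma Ej_coord1 {j : Fin n} {x : Xs n} (hx : x ∈ Ej j) : x.1 (j,1) = sl x := by
  rw [sl, Finset.sum_eq_single j]
  · intro k _ hk; exact (hx k hk).2
  · simp

lemma Ej_coord0 {j : Fin n} {x : Xs n} (hx : x ∈ Ej j) : x.1 (j,0) = 1 - sl x := by
  have h1 : sa x = x.1 (j,0) := by
    rw [sa, Finset.sum_eq_single j]
    · intro k _ hk; exact (hx k hk).1
    · simp
  have := sa_add_sl x; linarith

/-- the index of the edge a point with 0 < sl x < 1 lies on -/
lemma edge_exists (x : Xs n) (h0 : sl x ≠ 0) (h1 : sl x ≠ 1) :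
    ∃ j : Fin n, x.1 (j,0) ≠ 0 ∧ x.1 (j,1) ≠ 0 := by
  have hs0 : ∃ i, x.1 (i,1) ≠ 0 := by
    by_contra h; push_neg at h
    exact h0 (by rw [sl]; exact Finset.sum_eq_zero fun k _ => h k)
  have hs1 : ∃ i, x.1 (i,0) ≠ 0 := by
    by_contra h; push_neg at h
    have : sa x = 0 := Finset.sum_eq_zero fun k _ => h k
    have := sa_add_sl x; exact h1 (by linarith)
  obtain ⟨i, hi⟩ := hs0
  obtain ⟨i', hi'⟩ := hs1
  have : i' = i := by
    by_contra hne
    rcases X_indep x i' i hne with h | h <;> simp_all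
  subst this
  exact ⟨i', hi', hi⟩

lemma edge_mem {x : Xs n} {j : Fin n} (hj : x.1 (j,0) ≠ 0 ∧ x.1 (j,1) ≠ 0) : x ∈ Ej j := by
  intro k hk
  constructor
  · rcases X_indep x k j hk with h | h <;> simp_all
  · rcases X_indep x j k (Ne.symm hk) with h | h <;> simp_all

lemma edge_unique {x : Xs n} {j j' : Fin n} (hj : x ∈ Ej j)
    (h' : x.1 (j',0) ≠ 0 ∧ x.1 (j',1) ≠ 0) : j' = j := by
  by_contra hne
  exact h'.1 (hj j' hne).1

/-! ### clamp -/

def clamp (t : ℝ) : ℝ := max 0 (min 1 t)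

lemma clamp_nonneg (t : ℝ) : 0 ≤ clamp t := le_max_left _ _
lemma clamp_le_one (t : ℝ) : clamp t ≤ 1 := max_le (by norm_num) (min_le_left _ _)
lemma clamp_of_nonpos {t : ℝ} (h : t ≤ 0) : clamp t = 0 := by
  rw [clamp, max_eq_left]; exact le_trans (min_le_right _ _) h
lemma clamp_of_one_le {t : ℝ} (h : 1 ≤ t) : clamp t = 1 := by
  rw [clamp, min_eq_left h, max_eq_right]; norm_num
lemma clamp_of_mem {t : ℝ} (h0 : 0 ≤ t) (h1 : t ≤ 1) : clamp t = t := by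
  rw [clamp, min_eq_right h1, max_eq_right h0]
lemma clamp_neg1 : clamp (-1) = 0 := clamp_of_nonpos (by norm_num)
lemma clamp_neg2 : clamp (-2) = 0 := clamp_of_nonpos (by norm_num)
lemma clamp_zero : clamp 0 = 0 := clamp_of_nonpos le_rfl
lemma clamp_one' : clamp 1 = 1 := clamp_of_one_le le_rfl
lemma clamp_two : clamp 2 = 1 := clamp_of_one_le (by norm_num)
lemma clamp_three : clamp 3 = 1 := clamp_of_one_le (by norm_num)

lemma continuous_clamp : Continuous clamp :=
  continuous_const.max (continuous_const.min continuous_id)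

@[fun_prop]
lemma Continuous.clamp {α : Type*} [TopologicalSpace α] {f : α → ℝ} (hf : Continuous f) :
    Continuous fun a => clamp (f a) := continuous_clamp.comp hf

/-! ### the strings γ -/

def gammaF (j : Fin n) (τ : ℝ) : Fin n × Fin 2 → ℝ := fun v =>
  if v.2 = 0 then
    (1 - clamp (3*τ-1)) * ((1 - clamp (3*τ))/n + clamp (3*τ) * (if v.1 = j then 1 else 0))
  else
    clamp (3*τ-1) * ((1 - clamp (3*τ-2)) * (if v.1 = j then 1 else 0) + clamp (3*τ-2)/n)

variable [NeZero n]

lemma sum_delta (j : Fin n) (a b : ℝ) :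
    ∑ k : Fin n, (a/n + b * (if k = j then 1 else 0)) = a + b := by
  rw [Finset.sum_add_distrib, ← Finset.mul_sum, Finset.sum_ite_eq' Finset.univ j (fun _ => (1:ℝ))]
  simp only [Finset.sum_const, Finset.card_univ, Fintype.card_fin, nsmul_eq_mul, Finset.mem_univ,
    if_true, mul_one]
  have : (n:ℝ) ≠ 0 := by
    have := NeZero.pos n
    positivity
  field_simp

lemma sum_delta' (j : Fin n) (a b : ℝ) :
    ∑ k : Fin n, (b * (if k = j then 1 else 0) + a/n) = a + b := by
  rw [← sum_delta j a b]
  exact Finset.sum_congr rfl fun k _ => by ring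

lemma npos : (0:ℝ) < (n:ℝ) := by
  have := NeZero.pos n
  exact_mod_cast this

def gamma (j : Fin n) (τ : ℝ) : Xs n := by
  refine mkX (gammaF j τ) ?_ ?_ ?_
  · intro v
    rw [gammaF]
    have h1 := clamp_nonneg (3*τ-1); have h2 := clamp_le_one (3*τ-1)
    have h3 := clamp_nonneg (3*τ); have h4 := clamp_le_one (3*τ)
    have h5 := clamp_nonneg (3*τ-2); have h6 := clamp_le_one (3*τ-2)
    have hn := npos (n := n)
    split_ifs <;>
      refine mul_nonneg (by linarith) (add_nonneg ?_ ?_) <;>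
      first
        | exact div_nonneg (by linarith) hn.le
        | exact mul_nonneg (by linarith) (by norm_num)
  · rw [Fintype.sum_prod_type]
    simp only [Fin.sum_univ_two, gammaF]
    rw [Finset.sum_add_distrib]
    simp only [reduceIte, one_ne_zero, if_true, if_false]
    rw [← Finset.mul_sum, ← Finset.mul_sum, sum_delta, sum_delta']
    ring
  · intro i j' hij
    by_contra hcon
    push_neg at hcon
    obtain ⟨hc0, hc1⟩ := hcon
    simp only [gammaF, reduceIte, one_ne_zero] at hc0 hc1
    have h1 := clamp_nonneg (3*τ-1); have h2 := clamp_le_one (3*τ-1)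
    have hσ0 : clamp (3*τ-1) ≠ 0 := fun h => hc1 (by rw [h]; ring)
    have hσ1 : clamp (3*τ-1) ≠ 1 := fun h => hc0 (by rw [h]; ring)
    -- hence 0 < 3τ-1 < 1
    have ht1 : 0 < 3*τ-1 := by
      by_contra h; push_neg at h; exact hσ0 (clamp_of_nonpos h)
    have ht2 : 3*τ-1 < 1 := by
      by_contra h; push_neg at h; exact hσ1 (clamp_of_one_le h)
    have hα : clamp (3*τ) = 1 := clamp_of_one_le (by linarith)
    have hβ : clamp (3*τ-2) = 0 := clamp_of_nonpos (by linarith)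
    simp only [hα, hβ, sub_self, zero_div, zero_mul, one_mul, zero_add, add_zero,
      mul_zero, mul_one] at hc0 hc1
    have hi : i = j := by
      by_contra h
      rw [if_neg h] at hc0
      simp at hc0
    have hj : j' = j := by
      by_contra h
      rw [if_neg h] at hc1
      simp at hc1
    exact hij (hi.trans hj.symm)

lemma gamma0 (j k : Fin n) (τ : ℝ) :
    (gamma j τ).1 (k, 0) =
    (1 - clamp (3*τ-1)) * ((1 - clamp (3*τ))/n + clamp (3*τ) * (if k = j then 1 else 0)) := rfl

lemma gamma1 (j k : Fin n) (τ : ℝ) :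
    (gamma j τ).1 (k, 1) =
    clamp (3*τ-1) * ((1 - clamp (3*τ-2)) * (if k = j then 1 else 0) + clamp (3*τ-2)/n) := rfl

lemma X_ext {x y : Xs n} (h0 : ∀ k, x.1 (k,0) = y.1 (k,0)) (h1 : ∀ k, x.1 (k,1) = y.1 (k,1)) :
    x = y := by
  apply Subtype.ext
  funext v
  obtain ⟨k, ε⟩ := v
  fin_cases ε
  · exact h0 k
  · exact h1 k

lemma sl_gamma (j : Fin n) (τ : ℝ) : sl (gamma j τ) = clamp (3*τ-1) := by
  rw [sl]
  simp only [gamma1]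
  rw [← Finset.mul_sum, sum_delta']
  ring

def cA : Xs n := gamma ⟨0, NeZero.pos n⟩ 0
def cB : Xs n := gamma ⟨0, NeZero.pos n⟩ 1

lemma gamma_zero (j : Fin n) : gamma j 0 = cA := by
  apply X_ext <;> intro k <;> rw [cA] <;> simp only [gamma0, gamma1] <;>
    norm_num [clamp_neg1, clamp_neg2, clamp_zero]

lemma gamma_one (j : Fin n) : gamma j 1 = cB := by
  apply X_ext <;> intro k <;> rw [cB] <;> simp only [gamma0, gamma1] <;>
    norm_num [clamp_one', clamp_two, clamp_three]

lemma cA0 (k : Fin n) : (cA : Xs n).1 (k,0) = 1/n := by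
  rw [cA, gamma0]
  norm_num [clamp_neg1, clamp_zero]
lemma cA1 (k : Fin n) : (cA : Xs n).1 (k,1) = 0 := by
  rw [cA, gamma1]
  norm_num [clamp_neg1]
lemma cB0 (k : Fin n) : (cB : Xs n).1 (k,0) = 0 := by
  rw [cB, gamma0]
  norm_num [clamp_two]
lemma cB1 (k : Fin n) : (cB : Xs n).1 (k,1) = 1/n := by
  rw [cB, gamma1]
  norm_num [clamp_one', clamp_two]

/-- a point of the edge `Ej j` is on the string -/
lemma gamma_edge {j : Fin n} {x : Xs n} (hx : x ∈ Ej j) : gamma j ((sl x + 1)/3) = x := by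
  have hs0 := sl_nonneg x; have hs1 := sl_le_one x
  have hτ : 3 * ((sl x + 1)/3) = sl x + 1 := by ring
  have e1 : clamp (sl x + 1) = 1 := clamp_of_one_le (by linarith)
  have e2 : clamp (sl x + 1 - 1) = sl x := by
    rw [show sl x + 1 - 1 = sl x by ring]
    exact clamp_of_mem hs0 hs1
  have e3 : clamp (sl x + 1 - 2) = 0 := clamp_of_nonpos (by linarith)
  apply X_ext <;> intro k
  · rw [gamma0, hτ, e1, e2]
    by_cases hk : k = j
    · rw [if_pos hk, hk, Ej_coord0 hx]
      norm_num
    · rw [if_neg hk, (hx k hk).1]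
      norm_num
  · rw [gamma1, hτ, e2, e3]
    by_cases hk : k = j
    · rw [if_pos hk, hk, Ej_coord1 hx]
      norm_num
    · rw [if_neg hk, (hx k hk).2]
      norm_num

/-! ### continuity on X -/

lemma continuous_coord (v : Fin n × Fin 2) : Continuous (fun x : Xs n => x.1 v) :=
  (continuous_apply v).comp continuous_subtype_val

lemma continuous_sl : Continuous (sl (n := n)) :=
  continuous_finset_sum _ fun k _ => continuous_coord (k,1)

lemma continuous_gamma_comp {α : Type*} [TopologicalSpace α] {h : α → ℝ} (hh : Continuous h)
    (j : Fin n) : Continuous fun a => gamma j (h a) := by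
  apply Continuous.subtype_mk
  apply continuous_pi
  intro v
  simp only [gamma, mkX, gammaF, Xval]
  split_ifs <;> fun_prop (disch := positivity)


/-! ### the circle -/

def ept (θ : ℝ) : EuclideanSpace ℝ (Fin 2) := WithLp.toLp 2 ![Real.cos θ, Real.sin θ]

lemma ept0 (θ : ℝ) : ept θ 0 = Real.cos θ := rfl
lemma ept1 (θ : ℝ) : ept θ 1 = Real.sin θ := rfl

lemma mem_sph_iff (x : EuclideanSpace ℝ (Fin 2)) :
    x ∈ Metric.sphere (0:EuclideanSpace ℝ (Fin 2)) 1 ↔ x 0 ^ 2 + x 1 ^ 2 = 1 := by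
  rw [mem_sphere_zero_iff_norm, EuclideanSpace.norm_eq]
  simp only [Real.norm_eq_abs, sq_abs, Fin.sum_univ_two]
  exact Real.sqrt_eq_one

def sphOf (θ : ℝ) : Sph 1 :=
  ⟨ept θ, (mem_sph_iff _).2 (by rw [ept0, ept1]; exact Real.cos_sq_add_sin_sq θ)⟩

lemma sphOf_cont : Continuous sphOf := by
  apply Continuous.subtype_mk
  exact (PiLp.continuous_toLp 2 (fun _ : Fin 2 => ℝ)).comp <| continuous_pi fun i => by
    fin_cases i
    · exact Real.continuous_cos
    · exact Real.continuous_sin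

lemma sphOf0 (θ : ℝ) : (sphOf θ).1 0 = Real.cos θ := rfl
lemma sphOf1 (θ : ℝ) : (sphOf θ).1 1 = Real.sin θ := rfl

lemma sph_ext {z w : Sph 1} (h0 : z.1 0 = w.1 0) (h1 : z.1 1 = w.1 1) : z = w := by
  apply Subtype.ext
  refine PiLp.ext fun i => ?_
  fin_cases i
  · exact h0
  · exact h1

def Aθ (z : Sph 1) : ℝ := Real.arccos (z.1 0)

lemma z_sq (z : Sph 1) : z.1 0 ^ 2 + z.1 1 ^ 2 = 1 := (mem_sph_iff z.1).1 z.2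

lemma z0_le (z : Sph 1) : z.1 0 ≤ 1 := by nlinarith [z_sq z, sq_nonneg (z.1 1)]
lemma z0_ge (z : Sph 1) : -1 ≤ z.1 0 := by nlinarith [z_sq z, sq_nonneg (z.1 1)]

lemma cos_A (z : Sph 1) : Real.cos (Aθ z) = z.1 0 := Real.cos_arccos (z0_ge z) (z0_le z)

lemma sin_A (z : Sph 1) : Real.sin (Aθ z) = |z.1 1| := by
  rw [Aθ, Real.sin_arccos, show 1 - z.1 0 ^2 = z.1 1 ^2 by nlinarith [z_sq z],
    Real.sqrt_sq_eq_abs]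

lemma A_nonneg (z : Sph 1) : 0 ≤ Aθ z := Real.arccos_nonneg _
lemma A_le_pi (z : Sph 1) : Aθ z ≤ Real.pi := Real.arccos_le_pi _

lemma continuous_A : Continuous (Aθ : Sph 1 → ℝ) :=
  Real.continuous_arccos.comp ((PiLp.continuous_apply 2 (fun _ : Fin 2 => ℝ) (0 : Fin 2)).comp continuous_subtype_val)

lemma continuous_im : Continuous (fun z : Sph 1 => z.1 1) :=
  (PiLp.continuous_apply 2 (fun _ : Fin 2 => ℝ) (1 : Fin 2)).comp continuous_subtype_val

lemma sphOf_A_pos {z : Sph 1} (h : 0 ≤ z.1 1) : sphOf (Aθ z) = z :=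
  sph_ext (cos_A z) (by rw [sphOf1, sin_A, abs_of_nonneg h])

lemma sphOf_A_neg {z : Sph 1} (h : z.1 1 ≤ 0) : sphOf (-Aθ z) = z :=
  sph_ext (by rw [sphOf0, Real.cos_neg]; exact cos_A z)
    (by rw [sphOf1, Real.sin_neg, sin_A, abs_of_nonpos h]; ring)

lemma im_zero_cases {z : Sph 1} (h : z.1 1 = 0) : z.1 0 = 1 ∨ z.1 0 = -1 := by
  have hsq := z_sq z
  have h2 : (z.1 0 - 1) * (z.1 0 + 1) = 0 := by nlinarith
  rcases mul_eq_zero.1 h2 with h3 | h3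
  · left; linarith
  · right; linarith

lemma A_one {z : Sph 1} (h : z.1 0 = 1) : Aθ z = 0 := by rw [Aθ, h, Real.arccos_one]
lemma A_neg_one {z : Sph 1} (h : z.1 0 = -1) : Aθ z = Real.pi := by
  rw [Aθ, h, Real.arccos_neg_one]

lemma SphPt_0 : (SphPt 1).1 0 = 1 := by simp [SphPt, EuclideanSpace.single_apply]
lemma SphPt_1 : (SphPt 1).1 1 = 0 := by simp [SphPt, EuclideanSpace.single_apply]

lemma sphOf_zero : sphOf 0 = SphPt 1 :=
  sph_ext (by rw [sphOf0, Real.cos_zero, SphPt_0])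
    (by rw [sphOf1, Real.sin_zero, SphPt_1])

lemma sphOf_two_pi : sphOf (2*Real.pi) = SphPt 1 :=
  sph_ext (by rw [sphOf0, Real.cos_two_pi, SphPt_0])
    (by rw [sphOf1, Real.sin_two_pi, SphPt_1])

lemma A_SphPt : Aθ (SphPt 1) = 0 := A_one SphPt_0

/-! ### the wedge -/

def baseW (n : ℕ) : WedgeSpheres (Fin (n-1)) (fun _ => 1) := Quot.mk _ (Sum.inl ())

def mkW (i : Fin (n-1)) (z : Sph 1) : WedgeSpheres (Fin (n-1)) (fun _ => 1) :=
  Quot.mk _ (Sum.inr ⟨i, z⟩)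

lemma mkW_base (i : Fin (n-1)) : mkW i (SphPt 1) = baseW n :=
  Quot.sound ⟨Or.inr ⟨i, rfl⟩, Or.inl rfl⟩

lemma continuous_mkW (i : Fin (n-1)) : Continuous (mkW i) :=
  continuous_quot_mk.comp (continuous_inr.comp continuous_sigmaMk)


/-! ### closed cover of X -/

lemma isClosed_Ej (j : Fin n) : IsClosed (Ej (n := n) j) := by
  have : Ej (n := n) j =
      ⋂ k, ⋂ (_ : k ≠ j), ({x : Xs n | x.1 (k,0) = 0} ∩ {x : Xs n | x.1 (k,1) = 0}) := by
    ext x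
    simp only [Set.mem_iInter, Set.mem_inter_iff, Set.mem_setOf_eq]
    rfl
  rw [this]
  exact isClosed_iInter fun k => isClosed_iInter fun _ =>
    ((isClosed_eq (continuous_coord _) continuous_const).inter
     (isClosed_eq (continuous_coord _) continuous_const))

lemma isClosed_DA : IsClosed {x : Xs n | sl x = 0} := isClosed_eq continuous_sl continuous_const
lemma isClosed_DB : IsClosed {x : Xs n | sl x = 1} := isClosed_eq continuous_sl continuous_const

def cov (n : ℕ) : Fin n ⊕ Fin 2 → Set (Xs n) :=
  Sum.elim (fun j => Ej j) (fun b => if b = 0 then {x | sl x = 0} else {x | sl x = 1})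

lemma isClosed_cov (i : Fin n ⊕ Fin 2) : IsClosed (cov n i) := by
  rcases i with j | b
  · exact isClosed_Ej j
  · by_cases hb : b = 0
    · rw [cov]; simp only [Sum.elim_inr, if_pos hb]; exact isClosed_DA
    · rw [cov]; simp only [Sum.elim_inr, if_neg hb]; exact isClosed_DB

lemma cov_covers : ⋃ i, cov n i = Set.univ := by
  apply Set.eq_univ_of_forall
  intro x
  rw [Set.mem_iUnion]
  rcases eq_or_ne (sl x) 0 with h0 | h0
  · exact ⟨Sum.inr 0, by simp [cov, h0]⟩
  rcases eq_or_ne (sl x) 1 with h1 | h1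
  · exact ⟨Sum.inr 1, by simp [cov, h1]⟩
  · obtain ⟨j, hj⟩ := edge_exists x h0 h1
    exact ⟨Sum.inl j, edge_mem hj⟩

lemma continuous_of_cov {β : Type*} [TopologicalSpace β] {f : Xs n → β}
    (h : ∀ i, ContinuousOn f (cov n i)) : Continuous f :=
  (locallyFinite_of_finite _).continuous cov_covers isClosed_cov h

/-! ### the map f : X → W -/

variable [NeZero n]

open Classical in
def fmap (x : Xs n) : WedgeSpheres (Fin (n-1)) (fun _ => 1) :=
  if h : ∃ j : Fin n, (j:ℕ) < n-1 ∧ x.1 (j,0) ≠ 0 ∧ x.1 (j,1) ≠ 0 then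
    mkW ⟨h.choose.1, h.choose_spec.1⟩ (sphOf (2*Real.pi*(sl x)))
  else baseW n

lemma fmap_DA {x : Xs n} (h : sl x = 0) : fmap x = baseW n := by
  rw [fmap, dif_neg]
  rintro ⟨j, -, -, hj1⟩
  exact hj1 (layer1_zero x h j)

lemma fmap_DB {x : Xs n} (h : sl x = 1) : fmap x = baseW n := by
  rw [fmap, dif_neg]
  rintro ⟨j, -, hj0, -⟩
  exact hj0 (layer0_zero x h j)

lemma fmap_Ej {x : Xs n} {j : Fin n} (hx : x ∈ Ej j) (hj : (j:ℕ) < n-1) :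
    fmap x = mkW ⟨j.1, hj⟩ (sphOf (2*Real.pi * sl x)) := by
  rcases eq_or_ne (sl x) 0 with h0 | h0
  · rw [fmap_DA h0, h0, mul_zero, sphOf_zero, mkW_base]
  rcases eq_or_ne (sl x) 1 with h1 | h1
  · rw [fmap_DB h1, h1, mul_one, sphOf_two_pi, mkW_base]
  · have hex : ∃ j' : Fin n, (j':ℕ) < n-1 ∧ x.1 (j',0) ≠ 0 ∧ x.1 (j',1) ≠ 0 := by
      refine ⟨j, hj, ?_, ?_⟩
      · rw [Ej_coord0 hx]
        intro h
        exact h1 (by linarith)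
      · rw [Ej_coord1 hx]
        exact h0
    rw [fmap, dif_pos hex]
    have hcj : hex.choose = j := edge_unique hx hex.choose_spec.2
    have heq : (⟨hex.choose.1, hex.choose_spec.1⟩ : Fin (n-1)) = ⟨j.1, hj⟩ :=
      Fin.ext (by simp [hcj])
    exact congrArg (fun t => mkW t (sphOf (2*Real.pi * sl x))) heq

lemma fmap_Elast {x : Xs n} {j : Fin n} (hx : x ∈ Ej j) (hj : ¬ (j:ℕ) < n-1) :
    fmap x = baseW n := by
  rw [fmap, dif_neg]
  rintro ⟨j', hj', h0, h1⟩
  have hne := edge_unique hx ⟨h0, h1⟩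
  rw [hne] at hj'
  exact hj hj'

lemma continuous_fmap : Continuous (fmap (n := n)) := by
  apply continuous_of_cov
  intro i
  rcases i with j | b
  · by_cases hj : (j:ℕ) < n-1
    · apply ContinuousOn.congr (f := fun x : Xs n => mkW ⟨j.1, hj⟩ (sphOf (2*Real.pi * sl x)))
      · exact ((continuous_mkW _).comp (sphOf_cont.comp
          (continuous_const.mul continuous_sl))).continuousOn
      · intro x hx
        exact fmap_Ej hx hj
    · apply ContinuousOn.congr (f := fun _ : Xs n => baseW n)
      · exact continuousOn_const
      · intro x hx
        exact fmap_Elast hx hj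
  · by_cases hb : b = 0 <;>
      [(apply ContinuousOn.congr (f := fun _ : Xs n => baseW n) continuousOn_const;
        intro x hx; rw [cov] at hx; simp only [Sum.elim_inr, if_pos hb] at hx; exact fmap_DA hx);
       (apply ContinuousOn.congr (f := fun _ : Xs n => baseW n) continuousOn_const;
        intro x hx; rw [cov] at hx; simp only [Sum.elim_inr, if_neg hb] at hx; exact fmap_DB hx)]

/-! ### the map g : W → X -/

def castL (i : Fin (n-1)) : Fin n := ⟨i.1, lt_of_lt_of_le i.2 (Nat.sub_le n 1)⟩
def lastF : Fin n := ⟨n-1, Nat.sub_lt (NeZero.pos n) one_pos⟩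

def gSig (p : Σ _ : Fin (n-1), Sph 1) : Xs n :=
  if 0 ≤ p.2.1 1 then gamma (castL p.1) (Aθ p.2 / Real.pi) else gamma lastF (Aθ p.2 / Real.pi)

lemma gSig_SphPt (i : Fin (n-1)) : gSig (n := n) ⟨i, SphPt 1⟩ = cA := by
  rw [gSig, if_pos (le_of_eq SphPt_1.symm), A_SphPt, zero_div, gamma_zero]

lemma continuous_gSig : Continuous (gSig (n := n)) := by
  apply continuous_sigma
  intro i
  show Continuous fun z : Sph 1 =>
      if (0:ℝ) ≤ z.1 1 then gamma (castL i) (Aθ z / Real.pi) else gamma lastF (Aθ z / Real.pi)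
  apply Continuous.if_le
  · exact continuous_gamma_comp (continuous_A.div_const _) _
  · exact continuous_gamma_comp (continuous_A.div_const _) _
  · exact continuous_const
  · exact continuous_im
  · intro z hz
    rcases im_zero_cases hz.symm with h | h
    · rw [A_one h, zero_div, gamma_zero, gamma_zero]
    · rw [A_neg_one h, div_self Real.pi_ne_zero, gamma_one, gamma_one]

lemma gmap_resp : ∀ a b, (fun a b : Unit ⊕ (Σ _ : Fin (n-1), Sph 1) =>
    (a = .inl () ∨ ∃ i, a = .inr ⟨i, SphPt 1⟩) ∧
    (b = .inl () ∨ ∃ i, b = .inr ⟨i, SphPt 1⟩)) a b →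
    Sum.elim (fun _ => cA (n := n)) gSig a = Sum.elim (fun _ => cA) gSig b := by
  have key : ∀ c : Unit ⊕ (Σ _ : Fin (n-1), Sph 1),
      (c = .inl () ∨ ∃ i, c = .inr ⟨i, SphPt 1⟩) →
      Sum.elim (fun _ => cA (n := n)) gSig c = cA := by
    rintro c (rfl | ⟨i, rfl⟩)
    · rfl
    · exact gSig_SphPt i
  rintro a b ⟨ha, hb⟩
  rw [key a ha, key b hb]

def gmap : WedgeSpheres (Fin (n-1)) (fun _ => 1) → Xs n :=
  Quot.lift (Sum.elim (fun _ => cA) gSig) gmap_resp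

lemma continuous_gmap : Continuous (gmap (n := n)) :=
  continuous_quot_lift _ (continuous_const.sumElim continuous_gSig)

lemma gmap_base : gmap (baseW n) = cA := rfl

lemma gmap_mkW (i : Fin (n-1)) (z : Sph 1) : gmap (mkW i z) = gSig ⟨i, z⟩ := rfl


/-! ### the homotopy fmap ∘ gmap ≃ id -/

lemma sphOf_add_two_pi (θ : ℝ) : sphOf (θ + 2*Real.pi) = sphOf θ :=
  sph_ext (by rw [sphOf0, sphOf0, Real.cos_add_two_pi])
    (by rw [sphOf1, sphOf1, Real.sin_add_two_pi])

lemma sl_cA : sl (cA : Xs n) = 0 := by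
  rw [sl]
  exact Finset.sum_eq_zero fun k _ => cA1 k

def Fraw (u : ℝ) (a : Unit ⊕ (Σ _ : Fin (n-1), Sph 1)) : WedgeSpheres (Fin (n-1)) (fun _ => 1) :=
  Sum.elim (fun _ => baseW n)
    (fun p => if 0 ≤ p.2.1 1
      then mkW p.1 (sphOf (2*Real.pi*(1-u)*clamp (3*(Aθ p.2)/Real.pi - 1) + u*(Aθ p.2)))
      else mkW p.1 (sphOf (-(u*(Aθ p.2))))) a

lemma Fraw_SphPt (u : ℝ) (i : Fin (n-1)) : Fraw u (.inr ⟨i, SphPt 1⟩) = baseW n := by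
  rw [Fraw]
  simp only [Sum.elim_inr, A_SphPt, if_pos (le_of_eq SphPt_1.symm)]
  rw [show 2*Real.pi*(1-u)*clamp (3*(0:ℝ)/Real.pi - 1) + u*0 = 0 by
    rw [show 3*(0:ℝ)/Real.pi - 1 = -1 by ring, clamp_neg1]; ring]
  rw [sphOf_zero, mkW_base]

lemma Fraw_resp (u : ℝ) : ∀ a b, (fun a b : Unit ⊕ (Σ _ : Fin (n-1), Sph 1) =>
    (a = .inl () ∨ ∃ i, a = .inr ⟨i, SphPt 1⟩) ∧
    (b = .inl () ∨ ∃ i, b = .inr ⟨i, SphPt 1⟩)) a b → Fraw u a = Fraw u b := by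
  have key : ∀ c : Unit ⊕ (Σ _ : Fin (n-1), Sph 1),
      (c = .inl () ∨ ∃ i, c = .inr ⟨i, SphPt 1⟩) → Fraw u c = baseW n := by
    rintro c (rfl | ⟨i, rfl⟩)
    · rfl
    · exact Fraw_SphPt u i
  rintro a b ⟨ha, hb⟩
  rw [key a ha, key b hb]

def GW (q : WedgeSpheres (Fin (n-1)) (fun _ => 1) × I) : WedgeSpheres (Fin (n-1)) (fun _ => 1) :=
  Quot.lift (fun a => Fraw q.2 a) (Fraw_resp q.2) q.1

lemma continuous_GW : Continuous (GW (n := n)) := by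
  apply (isQuotientMap_quot_mk).continuous_lift_prod_left
  show Continuous fun p : (Unit ⊕ (Σ _ : Fin (n-1), Sph 1)) × I => Fraw (p.2 : ℝ) p.1
  have hrw : (fun p : (Unit ⊕ (Σ _ : Fin (n-1), Sph 1)) × I => Fraw (p.2 : ℝ) p.1) =
      (Sum.elim (fun _ : Unit × I => baseW n)
        (fun q : (Σ _ : Fin (n-1), Sph 1) × I => Fraw (q.2 : ℝ) (.inr q.1))) ∘
      (Homeomorph.sumProdDistrib) := by
    funext p
    rcases p with ⟨a | a, u⟩ <;> rfl
  rw [hrw]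
  refine Continuous.comp ?_ (Homeomorph.continuous _)
  apply Continuous.sumElim continuous_const
  have hrw2 : (fun q : (Σ _ : Fin (n-1), Sph 1) × I => Fraw (q.2 : ℝ) (.inr q.1)) =
      (fun q : Σ _ : Fin (n-1), Sph 1 × I => Fraw (q.2.2 : ℝ) (.inr ⟨q.1, q.2.1⟩)) ∘
      (Homeomorph.sigmaProdDistrib) := by
    funext q
    rcases q with ⟨⟨i, z⟩, u⟩
    rfl
  rw [hrw2]
  refine Continuous.comp ?_ (Homeomorph.continuous _)
  apply continuous_sigma
  intro i
  show Continuous fun (p : Sph 1 × I) =>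
    if 0 ≤ p.1.1 1
      then mkW i (sphOf (2*Real.pi*(1-(p.2:ℝ))*clamp (3*(Aθ p.1)/Real.pi - 1) + (p.2:ℝ)*(Aθ p.1)))
      else mkW i (sphOf (-((p.2:ℝ)*(Aθ p.1))))
  have hA : Continuous fun p : Sph 1 × I => Aθ p.1 := continuous_A.comp continuous_fst
  have hu : Continuous fun p : Sph 1 × I => (p.2 : ℝ) :=
    continuous_subtype_val.comp continuous_snd
  apply Continuous.if_le
  · apply (continuous_mkW i).comp
    apply sphOf_cont.comp
    exact (((continuous_const.mul (continuous_const.sub hu)).mul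
      (Continuous.clamp ((continuous_const.mul hA).div_const _ |>.sub continuous_const))).add
      (hu.mul hA))
  · exact (continuous_mkW i).comp (sphOf_cont.comp (hu.mul hA).neg)
  · exact continuous_const
  · exact continuous_im.comp continuous_fst
  · intro p hp
    rcases im_zero_cases hp.symm with h | h
    · rw [A_one h]
      rw [show 2*Real.pi*(1-(p.2:ℝ))*clamp (3*(0:ℝ)/Real.pi - 1) + (p.2:ℝ)*0 = 0 by
        rw [show 3*(0:ℝ)/Real.pi - 1 = -1 by ring, clamp_neg1]; ring]
      rw [show -((p.2:ℝ)*0) = 0 by ring]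
    · rw [A_neg_one h]
      rw [show 3*Real.pi/Real.pi - 1 = 2 by rw [mul_div_assoc, div_self Real.pi_ne_zero]; ring,
        clamp_two]
      rw [show 2*Real.pi*(1-(p.2:ℝ))*1 + (p.2:ℝ)*Real.pi = -((p.2:ℝ)*Real.pi) + 2*Real.pi by
        ring]
      rw [sphOf_add_two_pi]

/-- `fmap` of a string point -/
lemma fmap_gamma {j : Fin n} (hj : (j:ℕ) < n-1) (τ : ℝ) :
    fmap (gamma j τ) = mkW ⟨j.1, hj⟩ (sphOf (2*Real.pi * clamp (3*τ-1))) := by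
  have hsl := sl_gamma j τ
  rcases eq_or_ne (clamp (3*τ-1)) 0 with h0 | h0
  · rw [fmap_DA (by rw [hsl, h0]), h0, mul_zero, sphOf_zero, mkW_base]
  rcases eq_or_ne (clamp (3*τ-1)) 1 with h1 | h1
  · rw [fmap_DB (by rw [hsl, h1]), h1, mul_one, sphOf_two_pi, mkW_base]
  · have ht1 : 0 < 3*τ-1 := by
      by_contra h; push_neg at h; exact h0 (clamp_of_nonpos h)
    have ht2 : 3*τ-1 < 1 := by
      by_contra h; push_neg at h; exact h1 (clamp_of_one_le h)
    have hα : clamp (3*τ) = 1 := clamp_of_one_le (by linarith)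
    have hβ : clamp (3*τ-2) = 0 := clamp_of_nonpos (by linarith)
    have hmem : gamma j τ ∈ Ej j := by
      intro k hk
      rw [gamma0, gamma1, hα, hβ, if_neg hk]
      norm_num
    rw [fmap_Ej hmem hj, hsl]

lemma fmap_gamma_last (τ : ℝ) : fmap (gamma (lastF (n := n)) τ) = baseW n := by
  have hsl := sl_gamma (lastF (n := n)) τ
  rcases eq_or_ne (clamp (3*τ-1)) 0 with h0 | h0
  · exact fmap_DA (by rw [hsl, h0])
  rcases eq_or_ne (clamp (3*τ-1)) 1 with h1 | h1
  · exact fmap_DB (by rw [hsl, h1])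
  · have ht1 : 0 < 3*τ-1 := by
      by_contra h; push_neg at h; exact h0 (clamp_of_nonpos h)
    have ht2 : 3*τ-1 < 1 := by
      by_contra h; push_neg at h; exact h1 (clamp_of_one_le h)
    have hα : clamp (3*τ) = 1 := clamp_of_one_le (by linarith)
    have hβ : clamp (3*τ-2) = 0 := clamp_of_nonpos (by linarith)
    have hmem : gamma (lastF (n := n)) τ ∈ Ej lastF := by
      intro k hk
      rw [gamma0, gamma1, hα, hβ, if_neg hk]
      norm_num
    exact fmap_Elast hmem (by rw [lastF]; exact lt_irrefl _)

lemma GW_zero (w : WedgeSpheres (Fin (n-1)) (fun _ => 1)) :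
    GW (w, (0 : I)) = fmap (gmap w) := by
  induction w using Quot.ind with
  | _ a =>
  rcases a with u | ⟨i, z⟩
  · show baseW n = fmap cA
    rw [fmap_DA sl_cA]
  · show Fraw (((0:I)) : ℝ) (.inr ⟨i, z⟩) = fmap (gSig ⟨i, z⟩)
    rw [Fraw, gSig]
    simp only [Sum.elim_inr, Set.Icc.coe_zero, zero_mul, add_zero, neg_zero, sub_zero, mul_one]
    by_cases him : 0 ≤ z.1 1
    · rw [if_pos him, if_pos him, fmap_gamma (show ((castL i : Fin n):ℕ) < n-1 from i.2)]
      have : (⟨(castL (n := n) i).1, i.2⟩ : Fin (n-1)) = i := Fin.ext rfl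
      rw [this]
      congr 1
      rw [show 3*(Aθ z / Real.pi) - 1 = 3*(Aθ z)/Real.pi - 1 by ring]
    · rw [if_neg him, if_neg him, fmap_gamma_last]
      rw [sphOf_zero, mkW_base]

lemma GW_one (w : WedgeSpheres (Fin (n-1)) (fun _ => 1)) : GW (w, (1 : I)) = w := by
  induction w using Quot.ind with
  | _ a =>
  rcases a with u | ⟨i, z⟩
  · rfl
  · show Fraw (((1:I)) : ℝ) (.inr ⟨i, z⟩) = mkW i z
    rw [Fraw]
    simp only [Sum.elim_inr, Set.Icc.coe_one]
    by_cases him : 0 ≤ z.1 1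
    · rw [if_pos him]
      rw [show 2*Real.pi*(1-(1:ℝ))*clamp (3*(Aθ z)/Real.pi - 1) + 1*(Aθ z) = Aθ z by ring]
      rw [sphOf_A_pos him]
    · rw [if_neg him]
      rw [show -((1:ℝ)*(Aθ z)) = -(Aθ z) by ring]
      rw [sphOf_A_neg (le_of_not_ge him)]


/-! ### the homotopy gmap ∘ fmap ≃ id -/

open scoped unitInterval

/-- contraction of the bottom simplex -/
def haX (x : Xs n) (h0 : sl x = 0) (u : ℝ) (hu0 : 0 ≤ u) (hu1 : u ≤ 1) : Xs n := by
  refine mkX (fun v => (1-u)*cA.1 v + u*x.1 v) ?_ ?_ ?_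
  · intro v
    show 0 ≤ (1-u)*(cA (n := n)).1 v + u*x.1 v
    have := X_nonneg (cA (n := n)) v
    have := X_nonneg x v
    nlinarith
  · rw [Finset.sum_add_distrib, ← Finset.mul_sum, ← Finset.mul_sum, X_sum, X_sum]
    ring
  · intro i j _
    right
    show (1-u)*(cA (n := n)).1 (j,1) + u*x.1 (j,1) = 0
    rw [cA1, layer1_zero x h0 j]
    ring

lemma haX_val (x : Xs n) (h0 : sl x = 0) (u : ℝ) (hu0 : 0 ≤ u) (hu1 : u ≤ 1) (v) :
    (haX x h0 u hu0 hu1).1 v = (1-u)*cA.1 v + u*x.1 v := rfl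

/-- expansion from the top cone point -/
def hbX (x : Xs n) (h1 : sl x = 1) (u : ℝ) (hu0 : 1/2 ≤ u) (hu1 : u ≤ 1) : Xs n := by
  refine mkX (fun v => (2-2*u)*cB.1 v + (2*u-1)*x.1 v) ?_ ?_ ?_
  · intro v
    show 0 ≤ (2-2*u)*(cB (n := n)).1 v + (2*u-1)*x.1 v
    have := X_nonneg (cB (n := n)) v
    have := X_nonneg x v
    nlinarith
  · rw [Finset.sum_add_distrib, ← Finset.mul_sum, ← Finset.mul_sum, X_sum, X_sum]
    ring
  · intro i j _
    left
    show (2-2*u)*(cB (n := n)).1 (i,0) + (2*u-1)*x.1 (i,0) = 0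
    rw [cB0, layer0_zero x h1 i]
    ring

lemma hbX_val (x : Xs n) (h1 : sl x = 1) (u : ℝ) (hu0 : 1/2 ≤ u) (hu1 : u ≤ 1) (v) :
    (hbX x h1 u hu0 hu1).1 v = (2-2*u)*cB.1 v + (2*u-1)*x.1 v := rfl

def Bco (u : ℝ) : ℝ := max (2 - 7*u/3) (4/3 - u)

lemma continuous_Bco : Continuous Bco := by
  apply Continuous.max <;> fun_prop

/-- the square homotopy on edge `j` -/
def Phi (j : Fin n) (x : Xs n) (u : ℝ) : Xs n :=
  if (j:ℕ) = n-1 then gamma j ((1 - sl x)*(u/3) + (sl x)*(min (2*u) ((4-2*u)/3)))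
  else if 1/2 ≤ sl x - u then gamma lastF (2 - 2*(sl x) + 2*u)
  else gamma j (min (u/3 + (Bco u) * (sl x)) 1)

open Classical in
def HX (p : I × Xs n) : Xs n :=
  if h0 : sl p.2 = 0 then haX p.2 h0 p.1 p.1.2.1 p.1.2.2
  else if h1 : sl p.2 = 1 then
    (if h12 : (1:ℝ)/2 ≤ (p.1 : ℝ) then hbX p.2 h1 p.1 h12 p.1.2.2
     else gamma lastF (2*(p.1:ℝ)))
  else Phi (edge_exists p.2 h0 h1).choose p.2 p.1

/-! #### value computations -/

lemma haX_on_edge {j : Fin n} {x : Xs n} (hx : x ∈ Ej j) (h0 : sl x = 0) (u : ℝ)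
    (hu0 : 0 ≤ u) (hu1 : u ≤ 1) : haX x h0 u hu0 hu1 = gamma j (u/3) := by
  have e1 : clamp (3*(u/3)) = u := by rw [show 3*(u/3) = u by ring, clamp_of_mem hu0 hu1]
  have e2 : clamp (3*(u/3)-1) = 0 := clamp_of_nonpos (by linarith [show 3*(u/3) = u by ring])
  have e3 : clamp (3*(u/3)-2) = 0 := clamp_of_nonpos (by nlinarith)
  apply X_ext <;> intro k
  · rw [haX_val, gamma0, e1, e2, cA0]
    by_cases hk : k = j
    · rw [if_pos hk, hk, Ej_coord0 hx, h0]
      ring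
    · rw [if_neg hk, (hx k hk).1]
      ring
  · rw [haX_val, gamma1, e2, cA1, layer1_zero x h0 k]
    ring

lemma hbX_on_edge {j : Fin n} {x : Xs n} (hx : x ∈ Ej j) (h1 : sl x = 1) (u : ℝ)
    (hu0 : 1/2 ≤ u) (hu1 : u ≤ 1) : hbX x h1 u hu0 hu1 = gamma j ((4-2*u)/3) := by
  have e1 : clamp (3*((4-2*u)/3)) = 1 := clamp_of_one_le (by linarith [show 3*((4-2*u)/3) = 4-2*u by ring])
  have e2 : clamp (3*((4-2*u)/3)-1) = 1 := clamp_of_one_le (by nlinarith)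
  have e3 : clamp (3*((4-2*u)/3)-2) = 2-2*u := by
    rw [show 3*((4-2*u)/3)-2 = 2-2*u by ring]
    exact clamp_of_mem (by linarith) (by linarith)
  apply X_ext <;> intro k
  · rw [hbX_val, gamma0, e2, cB0, layer0_zero x h1 k]
    ring
  · rw [hbX_val, gamma1, e2, e3, cB1]
    by_cases hk : k = j
    · rw [if_pos hk, hk, Ej_coord1 hx, h1]
      ring
    · rw [if_neg hk, (hx k hk).2]
      ring

lemma hbX_half {x : Xs n} (h1 : sl x = 1) (hu0 : (1:ℝ)/2 ≤ 1/2) (hu1 : (1:ℝ)/2 ≤ 1) :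
    hbX x h1 (1/2) hu0 hu1 = cB := by
  apply X_ext <;> intro k
  · rw [hbX_val, layer0_zero x h1 k, cB0]
    ring
  · rw [hbX_val, cB1]
    norm_num


lemma Bco_le {u : ℝ} (h : u ≤ 1/2) : Bco u = 2 - 7*u/3 := max_eq_left (by linarith)
lemma Bco_ge {u : ℝ} (h : 1/2 ≤ u) : Bco u = 4/3 - u := max_eq_right (by linarith)

/-- the homotopy agrees with the square map `Phi j` on the edge `Ej j` -/
lemma HX_on_Ej {j : Fin n} {p : I × Xs n} (hx : p.2 ∈ Ej j) :
    HX p = Phi j p.2 (p.1 : ℝ) := by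
  obtain ⟨u, x⟩ := p
  have hu0 : (0:ℝ) ≤ u := u.2.1
  have hu1 : (u:ℝ) ≤ 1 := u.2.2
  rcases eq_or_ne (sl x) 0 with h0 | h0
  · rw [HX, dif_pos h0, haX_on_edge hx h0, Phi]
    by_cases hj : (j:ℕ) = n-1
    · rw [if_pos hj]
      exact congrArg (gamma j) (by rw [h0]; ring)
    · rw [if_neg hj, if_neg (by rw [h0]; simp only; intro h; linarith)]
      refine congrArg (gamma j) ?_
      rw [h0, mul_zero, add_zero, min_eq_left (by linarith)]
  · rcases eq_or_ne (sl x) 1 with h1 | h1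
    · rw [HX, dif_neg h0, dif_pos h1, Phi]
      by_cases hj : (j:ℕ) = n-1
      · have hjl : j = lastF := Fin.ext (by rw [hj]; rfl)
        rw [if_pos hj]
        by_cases h12 : (1:ℝ)/2 ≤ (u:ℝ)
        · rw [dif_pos h12, hbX_on_edge hx h1]
          refine congrArg (gamma j) ?_
          rw [h1, min_eq_right (by linarith)]
          ring
        · rw [dif_neg h12, hjl]
          refine congrArg (gamma lastF) ?_
          rw [h1, min_eq_left (by linarith)]
          ring
      · rw [if_neg hj]
        by_cases h12 : (1:ℝ)/2 ≤ (u:ℝ)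
        · rw [dif_pos h12, hbX_on_edge hx h1]
          by_cases hcond : 1/2 ≤ sl x - (u:ℝ)
          · have hu : (u:ℝ) = 1/2 := by rw [h1] at hcond; linarith
            rw [if_pos hcond, show (4-2*(u:ℝ))/3 = 1 by rw [hu]; norm_num,
              show 2 - 2*(sl x) + 2*(u:ℝ) = 1 by rw [h1, hu]; norm_num,
              gamma_one, gamma_one]
          · rw [if_neg hcond]
            refine congrArg (gamma j) ?_
            rw [h1, Bco_ge h12, min_eq_left (by linarith)]
            ring
        · rw [dif_neg h12, if_pos (by rw [h1]; linarith)]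
          exact congrArg (gamma lastF) (by rw [h1]; ring)
    · rw [HX, dif_neg h0, dif_neg h1]
      have hcj : (edge_exists x h0 h1).choose = j :=
        edge_unique hx (edge_exists x h0 h1).choose_spec
      rw [hcj]

/-- continuity of the square map -/
lemma continuous_PhiF (j : Fin n) : Continuous (fun p : I × Xs n => Phi j p.2 (p.1:ℝ)) := by
  have hu : Continuous (fun p : I × Xs n => (p.1:ℝ)) :=
    continuous_subtype_val.comp continuous_fst
  have hs : Continuous (fun p : I × Xs n => sl p.2) := continuous_sl.comp continuous_snd
  by_cases hj : (j:ℕ) = n-1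
  · have : (fun p : I × Xs n => Phi j p.2 (p.1:ℝ)) = fun p =>
        gamma j ((1 - sl p.2)*((p.1:ℝ)/3) + (sl p.2)*(min (2*(p.1:ℝ)) ((4-2*(p.1:ℝ))/3))) := by
      funext p
      rw [Phi, if_pos hj]
    rw [this]
    apply continuous_gamma_comp
    exact ((continuous_const.sub hs).mul (hu.div_const _)).add
      (hs.mul ((continuous_const.mul hu).min ((continuous_const.sub
        (continuous_const.mul hu)).div_const _)))
  · have : (fun p : I × Xs n => Phi j p.2 (p.1:ℝ)) = fun p =>
        if (1:ℝ)/2 ≤ sl p.2 - (p.1:ℝ) then gamma lastF (2 - 2*(sl p.2) + 2*(p.1:ℝ))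
        else gamma j (min ((p.1:ℝ)/3 + (Bco (p.1:ℝ)) * (sl p.2)) 1) := by
      funext p
      rw [Phi, if_neg hj]
    rw [this]
    apply Continuous.if_le
    · exact continuous_gamma_comp
        ((continuous_const.sub (continuous_const.mul hs)).add (continuous_const.mul hu)) _
    · exact continuous_gamma_comp
        (((hu.div_const _).add ((continuous_Bco.comp hu).mul hs)).min continuous_const) _
    · exact continuous_const
    · exact hs.sub hu
    · intro p hp
      have hu0 : (0:ℝ) ≤ p.1 := p.1.2.1
      have hsle := sl_le_one p.2
      have hs12 : sl p.2 = (p.1:ℝ) + 1/2 := by linarith [hp.symm]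
      have hu2 : (p.1:ℝ) ≤ 1/2 := by linarith
      have hB : 2 - 7*(p.1:ℝ)/3 ≤ Bco (p.1:ℝ) := le_max_left _ _
      have hmin : min ((p.1:ℝ)/3 + (Bco (p.1:ℝ)) * (sl p.2)) 1 = 1 := by
        apply min_eq_right
        have h2 : (2 - 7*(p.1:ℝ)/3) * ((p.1:ℝ) + 1/2) ≤ Bco (p.1:ℝ) * ((p.1:ℝ) + 1/2) :=
          mul_le_mul_of_nonneg_right hB (by linarith)
        rw [hs12]
        nlinarith [mul_nonneg hu0 (by linarith : (0:ℝ) ≤ 1/2 - (p.1:ℝ))]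
      rw [hmin, show 2 - 2*(sl p.2) + 2*(p.1:ℝ) = 1 by rw [hs12]; ring, gamma_one, gamma_one]

lemma continuous_HX : Continuous (HX (n := n)) := by
  have hu : Continuous (fun p : I × Xs n => (p.1:ℝ)) :=
    continuous_subtype_val.comp continuous_fst
  apply (locallyFinite_of_finite (fun i => {p : I × Xs n | p.2 ∈ cov n i})).continuous
  · apply Set.eq_univ_of_forall
    intro p
    have := cov_covers (n := n)
    have hmem : p.2 ∈ ⋃ i, cov n i := by rw [this]; trivial
    rw [Set.mem_iUnion] at hmem
    obtain ⟨i, hi⟩ := hmem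
    exact Set.mem_iUnion.2 ⟨i, hi⟩
  · exact fun i => (isClosed_cov i).preimage continuous_snd
  · intro i
    rcases i with j | b
    · exact ((continuous_PhiF j).continuousOn).congr fun p hp => HX_on_Ej hp
    · by_cases hb : b = 0
      · -- sl = 0 region
        have hS : {p : I × Xs n | p.2 ∈ cov n (Sum.inr b)} = {p | sl p.2 = 0} := by
          rw [cov]; ext p; simp [hb]
        rw [hS]
        apply (Topology.IsEmbedding.subtypeVal.toIsInducing.continuousOn_iff).2
        apply ContinuousOn.congr (f := fun p : I × Xs n =>
          (fun v => (1-(p.1:ℝ))*cA.1 v + (p.1:ℝ)*p.2.1 v : Fin n × Fin 2 → ℝ))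
        · apply Continuous.continuousOn
          apply continuous_pi
          intro v
          exact ((continuous_const.sub hu).mul continuous_const).add
            (hu.mul ((continuous_coord v).comp continuous_snd))
        · intro p hp
          have hp' : sl p.2 = 0 := hp
          show (HX p).1 = _
          rw [HX, dif_pos hp']
          rfl
      · -- sl = 1 region
        have hS : {p : I × Xs n | p.2 ∈ cov n (Sum.inr b)} = {p | sl p.2 = 1} := by
          rw [cov]; ext p; simp [hb]
        rw [hS]
        apply (Topology.IsEmbedding.subtypeVal.toIsInducing.continuousOn_iff).2
        apply ContinuousOn.congr (f := fun p : I × Xs n =>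
          if (1:ℝ)/2 ≤ (p.1:ℝ) then
            (fun v => (2-2*(p.1:ℝ))*cB.1 v + (2*(p.1:ℝ)-1)*p.2.1 v : Fin n × Fin 2 → ℝ)
          else (gamma lastF (2*(p.1:ℝ))).1)
        · apply Continuous.continuousOn
          apply Continuous.if_le
          · apply continuous_pi
            intro v
            exact ((continuous_const.sub (continuous_const.mul hu)).mul continuous_const).add
              (((continuous_const.mul hu).sub continuous_const).mul
                ((continuous_coord v).comp continuous_snd))
          · exact continuous_subtype_val.comp
              (continuous_gamma_comp (continuous_const.mul hu) _)
          · exact continuous_const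
          · exact hu
          · intro p hp
            funext v
            rw [← hp]
            norm_num
            rw [gamma_one]
        · intro p hp
          have hp' : sl p.2 = 1 := hp
          show (HX p).1 = _
          rw [HX, dif_neg (by rw [hp']; norm_num), dif_pos hp']
          dsimp only
          by_cases h12 : (1:ℝ)/2 ≤ (p.1:ℝ)
          · rw [dif_pos h12, if_pos h12]
            rfl
          · rw [dif_neg h12, if_neg h12]


lemma coeI0 : (((0:I)):ℝ) = 0 := rfl
lemma coeI1 : (((1:I)):ℝ) = 1 := rfl

lemma HX_zero (x : Xs n) : HX ((0:I), x) = gmap (fmap x) := by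
  have pi_pos := Real.pi_pos
  rcases eq_or_ne (sl x) 0 with h0 | h0
  · rw [HX, dif_pos h0, fmap_DA h0, gmap_base]
    apply X_ext <;> intro k <;> rw [haX_val, coeI0] <;> ring
  rcases eq_or_ne (sl x) 1 with h1 | h1
  · rw [HX, dif_neg h0, dif_pos h1, dif_neg (by rw [coeI0]; norm_num),
      fmap_DB h1, gmap_base, coeI0, mul_zero, gamma_zero]
  · have hs0 : 0 < sl x := lt_of_le_of_ne (sl_nonneg x) (Ne.symm h0)
    have hs1 : sl x < 1 := lt_of_le_of_ne (sl_le_one x) h1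
    have hmem : x ∈ Ej (edge_exists x h0 h1).choose :=
      edge_mem (edge_exists x h0 h1).choose_spec
    set j := (edge_exists x h0 h1).choose with hjdef
    rw [HX, dif_neg h0, dif_neg h1, ← hjdef]
    by_cases hjn : (j:ℕ) < n-1
    · rw [fmap_Ej hmem hjn, gmap_mkW, gSig]
      have hjj : ¬ (j:ℕ) = n-1 := by omega
      have hcast : castL (⟨j.1, hjn⟩ : Fin (n-1)) = j := Fin.ext rfl
      by_cases hs : sl x ≤ 1/2
      · have him : 0 ≤ (sphOf (2*Real.pi*sl x)).1 1 := by
          rw [sphOf1]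
          exact Real.sin_nonneg_of_nonneg_of_le_pi (by positivity) (by nlinarith)
        have hA : Aθ (sphOf (2*Real.pi*sl x)) = 2*Real.pi*sl x := by
          rw [Aθ, sphOf0, Real.arccos_cos (by positivity) (by nlinarith)]
        rw [if_pos him, hcast, hA,
          show 2*Real.pi*sl x / Real.pi = 2*sl x by field_simp,
          Phi, if_neg hjj]
        by_cases hcond : 1/2 ≤ sl x - ((0:I):ℝ)
        · have hs2 : sl x = 1/2 := by rw [coeI0] at hcond; linarith
          rw [if_pos hcond, show 2 - 2*sl x + 2*((0:I):ℝ) = 1 by rw [hs2, coeI0]; norm_num,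
            show 2*sl x = 1 by rw [hs2]; norm_num, gamma_one, gamma_one]
        · rw [if_neg hcond]
          refine (congrArg (gamma j) ?_).symm
          rw [coeI0, Bco_le (by norm_num)]
          rw [min_eq_left (by linarith)]
          ring
      · push_neg at hs
        have hsin : Real.sin (2*Real.pi*sl x) =
            -Real.sin (2*Real.pi - 2*Real.pi*sl x) := by
          rw [Real.sin_sub]
          simp [Real.sin_two_pi, Real.cos_two_pi]
        have hpos : 0 < Real.sin (2*Real.pi - 2*Real.pi*sl x) :=
          Real.sin_pos_of_pos_of_lt_pi (by nlinarith) (by nlinarith)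
        have him : ¬ 0 ≤ (sphOf (2*Real.pi*sl x)).1 1 := by
          rw [sphOf1]
          push_neg
          rw [hsin]
          linarith
        have hA : Aθ (sphOf (2*Real.pi*sl x)) = 2*Real.pi - 2*Real.pi*sl x := by
          rw [Aθ, sphOf0,
            show Real.cos (2*Real.pi*sl x) = Real.cos (2*Real.pi - 2*Real.pi*sl x) by
              rw [Real.cos_sub]; simp [Real.sin_two_pi, Real.cos_two_pi],
            Real.arccos_cos (by nlinarith) (by nlinarith)]
        rw [if_neg him, hA, Phi, if_neg hjj, if_pos (by rw [coeI0]; linarith)]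
        refine (congrArg (gamma lastF) ?_).symm
        rw [coeI0]
        field_simp
        ring
    · rw [fmap_Elast hmem hjn, gmap_base]
      have hjj : (j:ℕ) = n-1 := by have := j.2; omega
      rw [Phi, if_pos hjj, coeI0,
        show (1-sl x)*((0:ℝ)/3) + sl x * (min (2*(0:ℝ)) ((4-2*(0:ℝ))/3)) = 0 by
          rw [min_eq_left (by norm_num : (2:ℝ)*0 ≤ (4-2*0)/3)]
          ring,
        gamma_zero]

lemma HX_one (x : Xs n) : HX ((1:I), x) = x := by
  rcases eq_or_ne (sl x) 0 with h0 | h0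
  · rw [HX, dif_pos h0]
    apply X_ext <;> intro k <;> rw [haX_val, coeI1] <;> ring
  rcases eq_or_ne (sl x) 1 with h1 | h1
  · rw [HX, dif_neg h0, dif_pos h1, dif_pos (by rw [coeI1]; norm_num)]
    apply X_ext <;> intro k <;> rw [hbX_val, coeI1] <;> ring
  · have hmem : x ∈ Ej (edge_exists x h0 h1).choose :=
      edge_mem (edge_exists x h0 h1).choose_spec
    set j := (edge_exists x h0 h1).choose with hjdef
    rw [HX, dif_neg h0, dif_neg h1, ← hjdef, Phi]
    have hsle := sl_le_one x
    by_cases hjj : (j:ℕ) = n-1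
    · rw [if_pos hjj, coeI1,
        show (1-sl x)*((1:ℝ)/3) + sl x * (min (2*(1:ℝ)) ((4-2*(1:ℝ))/3)) = (sl x + 1)/3 by
          rw [min_eq_right (by norm_num : ((4:ℝ)-2*1)/3 ≤ 2*1)]
          ring,
        gamma_edge hmem]
    · rw [if_neg hjj, if_neg (by rw [coeI1]; intro h; linarith), coeI1,
        show min ((1:ℝ)/3 + (Bco 1) * (sl x)) 1 = (sl x + 1)/3 by
          rw [Bco_ge (by norm_num), min_eq_left (by linarith)]
          ring,
        gamma_edge hmem]


/-! ### assembly -/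

def fmapC : C(Xs n, WedgeSpheres (Fin (n-1)) (fun _ => 1)) := ⟨fmap, continuous_fmap⟩
def gmapC : C(WedgeSpheres (Fin (n-1)) (fun _ => 1), Xs n) := ⟨gmap, continuous_gmap⟩

def leftH : ContinuousMap.Homotopy ((gmapC (n := n)).comp fmapC) (ContinuousMap.id (Xs n)) where
  toContinuousMap := ⟨HX, continuous_HX⟩
  map_zero_left := fun x => HX_zero x
  map_one_left := fun x => HX_one x

def rightH : ContinuousMap.Homotopy ((fmapC (n := n)).comp gmapC)
    (ContinuousMap.id (WedgeSpheres (Fin (n-1)) (fun _ => 1))) where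
  toContinuousMap :=
    ⟨fun q => GW (q.2, q.1), continuous_GW.comp (continuous_snd.prodMk continuous_fst)⟩
  map_zero_left := fun w => GW_zero w
  map_one_left := fun w => GW_one w

def hequiv : ContinuousMap.HomotopyEquiv (Xs n) (WedgeSpheres (Fin (n-1)) (fun _ => 1)) where
  toFun := fmapC
  invFun := gmapC
  left_inv := ⟨leftH⟩
  right_inv := ⟨rightH⟩

end W12

/-- `I(Kₙ × K₂)` is homotopy equivalent to a wedge of `n - 1` circles. -/
theorem stmt12 (n : ℕ) (hn : 2 ≤ n) :
    Nonempty (ContinuousMap.HomotopyEquiv (indepReal (tensorG (SimpleGraph.completeGraph (Fin n)) K2))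
      (WedgeSpheres (Fin (n - 1)) (fun _ => 1))) := by
  haveI : NeZero n := ⟨by omega⟩
  exact ⟨W12.hequiv⟩

end
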